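/- For every polynomial u of degree at most k-1 on [-1,1] with u not identically zero, 2·u(1)² ≤ k² · ∫_{-1}^{1} u(ξ)² dξ. -/
import Mathlib

namespace LegendreAux

open Polynomial intervalIntegral Finset MeasureTheory

open Polynomial intervalIntegral Finset

noncomputable def legW (n : ℕ) : Polynomial ℝ := ((X - C 1) * (X - C (-1))) ^ n
noncomputable def legQ (n : ℕ) : Polynomial ℝ := derivative^[n] (legW n)
noncomputable def II (p : Polynomial ℝ) : ℝ := ∫ x in (-1:ℝ)..1, p.eval x

lemma poly_ii (p : Polynomial ℝ) (a b : ℝ) :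
    IntervalIntegrable (fun x => p.eval x) MeasureTheory.volume a b :=
  p.continuous.intervalIntegrable a b

lemma II_add (p q : Polynomial ℝ) : II (p + q) = II p + II q := by
  unfold II
  simp only [eval_add]
  exact integral_add (poly_ii p _ _) (poly_ii q _ _)

lemma II_Cmul (a : ℝ) (p : Polynomial ℝ) : II (C a * p) = a * II p := by
  unfold II
  simp only [eval_mul, eval_C]
  exact integral_const_mul a _

lemma II_sum {ι : Type*} (s : Finset ι) (f : ι → Polynomial ℝ) :
    II (∑ i ∈ s, f i) = ∑ i ∈ s, II (f i) := by
  unfold II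
  simp only [eval_finset_sum]
  exact integral_finset_sum (fun i _ => poly_ii (f i) _ _)

lemma II_derivative (p : Polynomial ℝ) : II (derivative p) = p.eval 1 - p.eval (-1) := by
  unfold II
  exact integral_eq_sub_of_hasDerivAt (fun x _ => p.hasDerivAt x) (poly_ii _ _ _)

lemma II_ibp (p q : Polynomial ℝ) :
    II (p * derivative q) = p.eval 1 * q.eval 1 - p.eval (-1) * q.eval (-1)
      - II (derivative p * q) := by
  unfold II
  simp only [eval_mul]
  exact integral_mul_deriv_eq_deriv_mul (fun x _ => p.hasDerivAt x) (fun x _ => q.hasDerivAt x)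
    (poly_ii _ _ _) (poly_ii _ _ _)

lemma legW_boundary {j n : ℕ} (hj : j < n) :
    (derivative^[j] (legW n)).eval 1 = 0 ∧ (derivative^[j] (legW n)).eval (-1) = 0 := by
  have h : legW n = (X - C 1) ^ n * (X - C (-1)) ^ n := by
    rw [legW, mul_pow]
  rw [h, iterate_derivative_mul]
  constructor <;>
  · rw [eval_finset_sum]
    refine Finset.sum_eq_zero fun i hi => ?_
    simp only [mem_range, Nat.lt_succ_iff] at hi
    rw [iterate_derivative_X_sub_pow, iterate_derivative_X_sub_pow]
    have h1 : 0 < n - (j - i) := by omega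
    have h2 : 0 < n - i := by omega
    simp [eval_smul, eval_pow, h1.ne', h2.ne', zero_pow]

lemma II_shift {n : ℕ} (j : ℕ) (hj : j ≤ n) (q : Polynomial ℝ) :
    II (legQ n * q) = (-1 : ℝ) ^ j * II (derivative^[n - j] (legW n) * derivative^[j] q) := by
  induction j with
  | zero => simp [legQ]
  | succ j ih =>
    have hj' : j ≤ n := by omega
    rw [ih hj']
    have hstep : derivative^[n - j] (legW n) = derivative (derivative^[n - (j+1)] (legW n)) := by
      have : n - j = (n - (j+1)) + 1 := by omega
      rw [this, Function.iterate_succ_apply']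
    have hb := legW_boundary (j := n - (j+1)) (n := n) (by omega)
    have := II_ibp (derivative^[j] q) (derivative^[n - (j+1)] (legW n))
    rw [mul_comm] at this
    rw [hstep, this, hb.1, hb.2]
    rw [Function.iterate_succ_apply']
    ring_nf

lemma II_legQ_mul (n : ℕ) (q : Polynomial ℝ) :
    II (legQ n * q) = (-1 : ℝ) ^ n * II (legW n * derivative^[n] q) := by
  have := II_shift n le_rfl q
  simpa using this

lemma II_legQ_orth {m n : ℕ} (h : m < n) (q : Polynomial ℝ) (hq : q.natDegree ≤ m) :
    II (legQ n * q) = 0 := by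
  rw [II_legQ_mul, iterate_derivative_eq_zero (lt_of_le_of_lt hq h), mul_zero]
  simp [II]

lemma legW_eq (n : ℕ) : legW n = (X - C 1) ^ n * (X - C (-1)) ^ n := by rw [legW, mul_pow]

lemma legQ_eval_one (n : ℕ) : (legQ n).eval 1 = n.factorial * 2 ^ n := by
  rw [legQ, legW_eq, iterate_derivative_mul, eval_finset_sum]
  rw [Finset.sum_eq_single 0]
  · simp only [Nat.sub_zero, Function.iterate_zero_apply, iterate_derivative_X_sub_pow_self,
      Nat.choose_zero_right, one_smul, eval_mul, eval_pow, eval_sub, eval_X, eval_C]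
    norm_num
  · intro i hi hi0
    simp only [mem_range, Nat.lt_succ_iff] at hi
    rw [iterate_derivative_X_sub_pow]
    have h2 : n - (n - i) ≠ 0 := by omega
    simp [eval_smul, eval_pow, zero_pow, h2]
  · simp

lemma legW_natDegree (n : ℕ) : (legW n).natDegree = 2 * n := by
  rw [legW_eq, natDegree_mul (((monic_X_sub_C (1:ℝ)).pow n).ne_zero)
    (((monic_X_sub_C (-1:ℝ)).pow n).ne_zero), natDegree_pow, natDegree_pow,
    natDegree_X_sub_C, natDegree_X_sub_C]
  ring

lemma legQ_natDegree_le (n : ℕ) : (legQ n).natDegree ≤ n := by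
  have h : (legQ n).natDegree ≤ 2 * n - n := by
    rw [legQ, ← legW_natDegree]
    exact natDegree_iterate_derivative (legW n) n
  omega

lemma legW_monic (n : ℕ) : (legW n).Monic := by
  rw [legW_eq]
  exact (((monic_X_sub_C (1:ℝ)).pow n).mul ((monic_X_sub_C (-1:ℝ)).pow n))

lemma legQ_coeff_top (n : ℕ) : (legQ n).coeff n = (2 * n).descFactorial n := by
  rw [legQ, coeff_iterate_derivative]
  have h := (legW_monic n).leadingCoeff
  rw [leadingCoeff, legW_natDegree] at h
  rw [(by ring : n + n = 2 * n), h]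
  simp

lemma legQ_ne_zero (n : ℕ) : (legQ n).coeff n ≠ 0 := by
  rw [legQ_coeff_top]
  have : (2 * n).descFactorial n ≠ 0 := by
    rw [Ne, Nat.descFactorial_eq_zero_iff_lt]
    omega
  exact_mod_cast this

lemma legW_top_derivative (n : ℕ) :
    derivative^[2 * n] (legW n) = C ((2 * n).factorial : ℝ) := by
  have hdeg : (derivative^[2 * n] (legW n)).natDegree ≤ 0 := by
    have := natDegree_iterate_derivative (legW n) (2 * n)
    rwa [legW_natDegree, Nat.sub_self] at this
  rw [eq_C_of_natDegree_le_zero hdeg, coeff_iterate_derivative]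
  have h := (legW_monic n).leadingCoeff
  rw [leadingCoeff, legW_natDegree] at h
  rw [Nat.zero_add, h]
  simp [Nat.descFactorial_self]

lemma legW_rec (n : ℕ) :
    derivative (X * legW (n + 1)) =
      C (2 * (n : ℝ) + 3) * legW (n + 1) + C (2 * (n : ℝ) + 2) * legW n := by
  have hx2 : (X - C (1:ℝ)) * (X - C (-1)) = X ^ 2 - 1 := by rw [C_neg, C_1]; ring
  simp only [legW, hx2, derivative_mul, derivative_X, derivative_pow, derivative_sub,
    derivative_one, derivative_X_pow, Nat.add_sub_cancel, Nat.cast_add, Nat.cast_one]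
  simp only [map_add, map_mul, map_ofNat, map_natCast, map_one, Nat.cast_ofNat]
  ring

lemma legW_eval_one {n : ℕ} (hn : 0 < n) : (legW n).eval 1 = 0 ∧ (legW n).eval (-1) = 0 := by
  simpa using legW_boundary (j := 0) hn

lemma II_legW_rec (n : ℕ) :
    (2 * (n : ℝ) + 3) * II (legW (n + 1)) + (2 * (n : ℝ) + 2) * II (legW n) = 0 := by
  have h := II_derivative (X * legW (n + 1))
  rw [legW_rec, II_add, II_Cmul, II_Cmul] at h
  have hb := legW_eval_one (n := n + 1) (Nat.succ_pos n)
  rw [eval_mul, eval_mul, hb.1, hb.2] at h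
  simpa using h

-- normalized (sign-corrected) integral

noncomputable def legB (n : ℕ) : ℝ := (-1 : ℝ) ^ n * II (legW n)

lemma legB_zero : legB 0 = 2 := by
  have : legW 0 = 1 := by simp [legW]
  simp only [legB, this, pow_zero, one_mul, II]
  simp
  norm_num

lemma legB_rec (n : ℕ) :
    (2 * (n : ℝ) + 3) * legB (n + 1) = (2 * (n : ℝ) + 2) * legB n := by
  have h := II_legW_rec n
  have : II (legW (n + 1)) = (-1 : ℝ) ^ (n + 1) * legB (n + 1) := by
    simp [legB, ← mul_assoc, ← mul_pow]
  rw [this] at h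
  have h2 : II (legW n) = (-1 : ℝ) ^ n * legB n := by
    simp [legB, ← mul_assoc, ← mul_pow]
  rw [h2] at h
  rcases Nat.even_or_odd n with he | ho
  · rw [he.neg_one_pow] at h
    rw [(by simpa using he.add_one.neg_one_pow : ((-1:ℝ)) ^ (n+1) = -1)] at h
    linarith
  · rw [ho.neg_one_pow] at h
    rw [(by simpa using ho.add_one.neg_one_pow : ((-1:ℝ)) ^ (n+1) = 1)] at h
    linarith

noncomputable def legN (n : ℕ) : ℝ := II (legQ n * legQ n)

lemma legN_eq (n : ℕ) : legN n = ((2 * n).factorial : ℝ) * legB n := by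
  rw [legN, II_legQ_mul]
  have : derivative^[n] (legQ n) = C ((2 * n).factorial : ℝ) := by
    rw [legQ, ← Function.iterate_add_apply, (by ring : n + n = 2 * n), legW_top_derivative]
  rw [this, mul_comm (legW n), II_Cmul, legB]
  ring

lemma key_identity (n : ℕ) :
    2 * ((n.factorial : ℝ) * 2 ^ n) ^ 2 = (2 * (n : ℝ) + 1) * legN n := by
  induction n with
  | zero => simp [legN_eq, legB_zero]
  | succ n ih =>
    rw [legN_eq] at ih ⊢
    have hrec := legB_rec n
    have hfac : ((2 * (n + 1)).factorial : ℝ)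
        = (2 * (n : ℝ) + 2) * (2 * (n : ℝ) + 1) * ((2 * n).factorial : ℝ) := by
      have : 2 * (n + 1) = (2 * n + 1) + 1 := by ring
      rw [this, Nat.factorial_succ, Nat.factorial_succ]
      push_cast
      ring
    have hstep : (2 * ((n : ℝ) + 1) + 1) * (((2 * (n + 1)).factorial : ℝ) * legB (n + 1))
        = (2 * (n : ℝ) + 2) ^ 2 * ((2 * (n : ℝ) + 1) * (((2 * n).factorial : ℝ) * legB n)) := by
      rw [hfac]
      push_cast
      nlinarith [hrec]
    push_cast
    push_cast at hstep ih
    rw [hstep, ← ih]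
    push_cast [Nat.factorial_succ]
    ring

lemma exists_rep : ∀ (k : ℕ) (u : Polynomial ℝ), u.degree < (k : ℕ) →
    ∃ c : ℕ → ℝ, u = ∑ n ∈ range k, C (c n) * legQ n := by
  intro k
  induction k with
  | zero =>
    intro u hu
    refine ⟨0, ?_⟩
    simp only [range_zero, sum_empty]
    by_contra h
    have := (natDegree_lt_iff_degree_lt h).mpr (by exact_mod_cast hu)
    exact Nat.not_lt_zero _ this
  | succ k ih =>
    intro u hu
    set a : ℝ := u.coeff k / (legQ k).coeff k with ha
    set v : Polynomial ℝ := u - C a * legQ k with hv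
    have hvdeg : v.degree < (k : ℕ) := by
      rw [degree_lt_iff_coeff_zero]
      intro m hm
      have hm' : k ≤ m := by exact_mod_cast hm
      rcases eq_or_lt_of_le hm' with rfl | hlt
      · simp only [hv, coeff_sub, coeff_C_mul]
        rw [ha, div_mul_cancel₀ _ (legQ_ne_zero _)]
        ring
      · have h1 : u.coeff m = 0 := by
          apply coeff_eq_zero_of_degree_lt
          exact lt_of_lt_of_le hu (by exact_mod_cast hlt)
        have h2 : (legQ k).coeff m = 0 :=
          coeff_eq_zero_of_natDegree_lt (lt_of_le_of_lt (legQ_natDegree_le k) hlt)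
        simp [hv, coeff_sub, coeff_C_mul, h1, h2]
    obtain ⟨c, hc⟩ := ih v hvdeg
    refine ⟨Function.update c k a, ?_⟩
    rw [sum_range_succ, Function.update_self]
    have : ∑ n ∈ range k, C (Function.update c k a n) * legQ n
        = ∑ n ∈ range k, C (c n) * legQ n := by
      refine sum_congr rfl fun n hn => ?_
      rw [Function.update_of_ne (by simp at hn; omega)]
    rw [this, ← hc, hv]
    ring

lemma II_QQ_offdiag {m n : ℕ} (h : m ≠ n) : II (legQ m * legQ n) = 0 := by
  rcases lt_or_gt_of_ne h with hlt | hlt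
  · rw [mul_comm]
    exact II_legQ_orth hlt _ (legQ_natDegree_le m)
  · exact II_legQ_orth hlt _ (legQ_natDegree_le n)

lemma legN_pos (n : ℕ) : 0 < legN n := by
  have h := key_identity n
  have h2 : (0:ℝ) < 2 * ((n.factorial : ℝ) * 2 ^ n) ^ 2 := by positivity
  nlinarith [h2]

lemma sum_odd (k : ℕ) : ∑ n ∈ range k, (2 * (n : ℝ) + 1) = (k : ℝ) ^ 2 := by
  induction k with
  | zero => simp
  | succ k ih => rw [sum_range_succ, ih]; push_cast; ring

end LegendreAux

open Polynomial Finset Real LegendreAux in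
theorem stmt_6 (k : ℕ) (u : Polynomial ℝ) (hu : u ≠ 0)
    (hdeg : u.degree < (k : ℕ)) :
    2 * (u.eval 1) ^ 2 ≤ (k : ℝ) ^ 2 * ∫ ξ in (-1 : ℝ)..1, (u.eval ξ) ^ 2 := by
  obtain ⟨c, hc⟩ := exists_rep k u hdeg
  have hint : (∫ ξ in (-1 : ℝ)..1, (u.eval ξ) ^ 2) = II (u * u) := by
    simp [II, eval_mul, sq]
  -- diagonalize II (u * u)
  have hdiag : II (u * u) = ∑ n ∈ range k, (c n) ^ 2 * legN n := by
    conv_lhs => rw [hc, sum_mul]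
    rw [II_sum]
    refine sum_congr rfl fun m hm => ?_
    rw [mul_sum, II_sum]
    rw [Finset.sum_eq_single m]
    · rw [(by ring : C (c m) * legQ m * (C (c m) * legQ m) = C (c m) * (C (c m) * (legQ m * legQ m))),
        II_Cmul, II_Cmul, legN]
      ring
    · intro n _ hn
      rw [(by ring : C (c m) * legQ m * (C (c n) * legQ n) = C (c m) * (C (c n) * (legQ m * legQ n))),
        II_Cmul, II_Cmul, II_QQ_offdiag (Ne.symm hn)]
      ring
    · intro hm'; exact absurd hm hm'
  have heval : u.eval 1 = ∑ n ∈ range k, c n * ((n.factorial : ℝ) * 2 ^ n) := by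
    rw [hc, eval_finset_sum]
    exact sum_congr rfl fun n _ => by rw [eval_mul, eval_C, legQ_eval_one]
  -- Cauchy–Schwarz
  set q : ℕ → ℝ := fun n => (n.factorial : ℝ) * 2 ^ n with hq
  have hcs := sum_mul_sq_le_sq_mul_sq (range k)
    (fun n => c n * Real.sqrt (legN n)) (fun n => q n / Real.sqrt (legN n))
  have hsqrt : ∀ n, Real.sqrt (legN n) ≠ 0 := fun n =>
    ne_of_gt (Real.sqrt_pos.mpr (legN_pos n))
  have h1 : ∀ n, c n * Real.sqrt (legN n) * (q n / Real.sqrt (legN n)) = c n * q n := by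
    intro n
    rw [mul_assoc, mul_comm (Real.sqrt (legN n)), div_mul_cancel₀ _ (hsqrt n)]
  have h2 : ∀ n, (c n * Real.sqrt (legN n)) ^ 2 = (c n) ^ 2 * legN n := by
    intro n
    rw [mul_pow, Real.sq_sqrt (legN_pos n).le]
  have h3 : ∀ n ∈ range k, (q n / Real.sqrt (legN n)) ^ 2 = (2 * (n : ℝ) + 1) / 2 := by
    intro n _
    rw [div_pow, Real.sq_sqrt (legN_pos n).le]
    have hk := key_identity n
    have := legN_pos n
    rw [hq]
    field_simp
    nlinarith [hk]
  simp only [h1] at hcs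
  rw [Finset.sum_congr rfl (fun n _ => h2 n), Finset.sum_congr rfl h3, ← Finset.sum_div,
    sum_odd] at hcs
  rw [hint, hdiag, heval]
  calc 2 * (∑ n ∈ range k, c n * q n) ^ 2
      ≤ 2 * ((∑ n ∈ range k, (c n) ^ 2 * legN n) * ((k : ℝ) ^ 2 / 2)) := by linarith [hcs]
    _ = (k : ℝ) ^ 2 * ∑ n ∈ range k, (c n) ^ 2 * legN n := by ring
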